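/- The Ewens sampling formula satisfies Kingman's partition-structure consistency relation: for every integer n ≥ 1, every real θ > 0, and every vector (a_1,…,a_n) of non-negative integers with Σ_{i=1}^n i·a_i = n, one has ESF_{n,θ}(a_1,…,a_n) = ((a_1+1)/(n+1))·ESF_{n+1,θ}(a_1+1, a_2,…,a_n, 0) + Σ_{j=2}^{n+1} (j·(a_j+1)/(n+1))·ESF_{n+1,θ}(a_1,…,a_{j−1}−1, a_j+1,…), where a term is interpreted as 0 whenever the indicated vector has a negative entry (and a_{n+1} is taken to be 0). -/

import Mathlib

open Finset

/-- The rising factorial `S_n(θ) = θ(θ+1)⋯(θ+n−1)`. -/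
noncomputable def risingFac (θ : ℝ) (n : ℕ) : ℝ := ∏ j ∈ Finset.range n, (θ + j)

/-- The Ewens sampling formula weight of a partition of `n` encoded by a vector
`a : Fin n → ℕ`, where `a i` is the number of parts equal to `i+1`. -/
noncomputable def ESF (n : ℕ) (θ : ℝ) (a : Fin n → ℕ) : ℝ :=
  (Nat.factorial n : ℝ) * θ ^ (∑ i, a i) /
    ((∏ i : Fin n, ((i.1 + 1 : ℝ) ^ (a i) * (Nat.factorial (a i) : ℝ))) * risingFac θ n)

/-- The finite set of all vectors `(a_1, …, a_n)` of non-negative integers with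
`Σ_{i=1}^n i·a_i = n` (each entry is at most `n`, so this filtered set captures all of them). -/
def partitionVectors (n : ℕ) : Finset (Fin n → ℕ) :=
  (Fintype.piFinset fun _ : Fin n => Finset.range (n + 1)).filter
    fun a => ∑ i : Fin n, (i.1 + 1) * a i = n

/-- Extend a vector indexed by `Fin n` to one indexed by `Fin (n+1)`, padding with `0`
(so that `a_{n+1} = 0`). -/
def extVec {n : ℕ} (a : Fin n → ℕ) : Fin (n + 1) → ℕ :=
  fun i => if h : i.1 < n then a ⟨i.1, h⟩ else 0

private lemma prod_update_G {m : ℕ} (s : Finset (Fin m)) (G : Fin m → ℕ → ℝ)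
    (f : Fin m → ℕ) (k : Fin m) (v : ℕ) (hk : k ∈ s) :
    ∏ i ∈ s, G i (Function.update f k v i) = G k v * ∏ i ∈ s.erase k, G i (f i) := by
  rw [← Finset.mul_prod_erase s (fun i => G i (Function.update f k v i)) hk,
    Function.update_self]
  congr 1
  exact Finset.prod_congr rfl fun i hi => by
    rw [Function.update_of_ne (Finset.ne_of_mem_erase hi)]

private lemma sum_update_G {m : ℕ} (s : Finset (Fin m))
    (f : Fin m → ℕ) (k : Fin m) (v : ℕ) (hk : k ∈ s) :
    ∑ i ∈ s, Function.update f k v i = v + ∑ i ∈ s.erase k, f i := by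
  rw [← Finset.add_sum_erase s (Function.update f k v) hk, Function.update_self]
  congr 1
  exact Finset.sum_congr rfl fun i hi => by
    rw [Function.update_of_ne (Finset.ne_of_mem_erase hi)]

theorem ewens_partition_structure_consistency (n : ℕ) (hn : 1 ≤ n) (θ : ℝ) (hθ : 0 < θ)
    (a : Fin n → ℕ) (ha : ∑ i : Fin n, (i.1 + 1) * a i = n) :
    ESF n θ a =
      ((extVec a 0 + 1 : ℝ) / (n + 1)) *
          ESF (n + 1) θ (Function.update (extVec a) 0 (extVec a 0 + 1)) +
        ∑ t : Fin n,
          (if extVec a t.castSucc = 0 then 0 else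
            (((t.1 + 2) * (extVec a t.succ + 1) : ℝ) / (n + 1)) *
              ESF (n + 1) θ
                (Function.update
                  (Function.update (extVec a) t.castSucc (extVec a t.castSucc - 1))
                  t.succ (extVec a t.succ + 1))) := by
  classical
  set b : Fin (n + 1) → ℕ := extVec a with hbdef
  set G : Fin (n + 1) → ℕ → ℝ :=
    fun i m => (i.1 + 1 : ℝ) ^ m * (Nat.factorial m : ℝ) with hGdef
  set P : ℝ := ∏ i : Fin n, ((i.1 + 1 : ℝ) ^ (a i) * (Nat.factorial (a i) : ℝ)) with hPdef
  set S : ℝ := risingFac θ n with hSdef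
  have hbcast : ∀ i : Fin n, b i.castSucc = a i := by
    intro i
    simp [hbdef, extVec, i.isLt]
  have hblast : b (Fin.last n) = 0 := by simp [hbdef, extVec]
  have hsum : ∑ i : Fin (n + 1), b i = ∑ i : Fin n, a i := by
    rw [Fin.sum_univ_castSucc]
    simp [hbcast, hblast]
  have hprod : ∏ i : Fin (n + 1), G i (b i) = P := by
    rw [Fin.prod_univ_castSucc]
    simp only [hblast, hGdef, hPdef, pow_zero, Nat.factorial_zero, Nat.cast_one, mul_one,
      one_mul]
    refine Finset.prod_congr rfl fun i _ => ?_
    rw [hbcast]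
    norm_num
  have hPpos : 0 < P := by
    refine Finset.prod_pos fun i _ => ?_
    positivity
  have hSpos : 0 < S := by
    refine Finset.prod_pos fun j hj => ?_
    positivity
  have hθn : (0:ℝ) < θ + n := by positivity
  have hrf : risingFac θ (n + 1) = S * (θ + n) := by
    rw [hSdef, risingFac, risingFac, Finset.prod_range_succ]
  have hESF : ESF n θ a = (Nat.factorial n : ℝ) * θ ^ (∑ i, a i) / (P * S) := rfl
  -- first term
  have hterm1 : ((b 0 + 1 : ℝ) / (n + 1)) *
      ESF (n + 1) θ (Function.update b 0 (b 0 + 1)) =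
      ESF n θ a * (θ / (θ + n)) := by
    have h1sum : ∑ i, Function.update b 0 (b 0 + 1) i = (∑ i : Fin n, a i) + 1 := by
      rw [sum_update_G _ _ _ _ (Finset.mem_univ _)]
      have h := Finset.add_sum_erase Finset.univ b (Finset.mem_univ (0 : Fin (n+1)))
      omega
    have h1prod : (∏ i : Fin (n + 1), G i (Function.update b 0 (b 0 + 1) i))
        = (b 0 + 1 : ℝ) * P := by
      rw [prod_update_G _ _ _ _ _ (Finset.mem_univ _), ← hprod,
        ← Finset.mul_prod_erase Finset.univ (fun i => G i (b i)) (Finset.mem_univ (0 : Fin (n+1)))]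
      set Q : ℝ := ∏ i ∈ Finset.univ.erase (0 : Fin (n+1)), G i (b i) with hQ
      have h00 : (((0 : Fin (n+1)).1 : ℝ)) = 0 := by simp
      simp only [hGdef, Nat.factorial_succ, h00]
      push_cast
      ring
    show ((b 0 + 1 : ℝ) / (n + 1)) *
        ((Nat.factorial (n+1) : ℝ) * θ ^ (∑ i, Function.update b 0 (b 0 + 1) i) /
          ((∏ i : Fin (n + 1), G i (Function.update b 0 (b 0 + 1) i)) * risingFac θ (n+1)))
        = ESF n θ a * (θ / (θ + n))
    rw [h1sum, h1prod, hrf, hESF, Nat.factorial_succ, pow_succ]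
    have hb01 : (0:ℝ) < (b 0 : ℝ) + 1 := by positivity
    field_simp
    push_cast
    ring
  -- general terms
  have hterm2 : ∀ t : Fin n,
      (if b t.castSucc = 0 then (0:ℝ) else
        (((t.1 + 2) * (b t.succ + 1) : ℝ) / (n + 1)) *
          ESF (n + 1) θ
            (Function.update (Function.update b t.castSucc (b t.castSucc - 1))
              t.succ (b t.succ + 1)))
      = ESF n θ a * (((t.1 + 1 : ℝ) * (a t)) / (θ + n)) := by
    intro t
    by_cases h0 : b t.castSucc = 0
    · rw [if_pos h0]
      have : a t = 0 := by rw [← hbcast t]; exact h0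
      rw [this]
      simp
    · rw [if_neg h0]
      set j : Fin (n+1) := t.castSucc with hj
      set k : Fin (n+1) := t.succ with hk
      have hjk : j ≠ k := by
        intro h
        have := congrArg Fin.val h
        simp [hj, hk] at this
      have hjmem : j ∈ Finset.univ.erase k := Finset.mem_erase.2 ⟨hjk, Finset.mem_univ _⟩
      have hjval : (j.1 : ℝ) = t.1 := by simp [hj]
      have hkval : (k.1 : ℝ) = t.1 + 1 := by simp [hk]
      have hbj1 : (1:ℝ) ≤ (b j : ℝ) := by
        exact_mod_cast Nat.one_le_iff_ne_zero.2 h0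
      obtain ⟨m, hm⟩ : ∃ m, b j = m + 1 := ⟨b j - 1, by omega⟩
      set c : Fin (n+1) → ℕ :=
        Function.update (Function.update b j (b j - 1)) k (b k + 1) with hc
      -- sum of c
      have hcsum : ∑ i, c i = ∑ i : Fin n, a i := by
        rw [← hsum, hc, sum_update_G _ _ _ _ (Finset.mem_univ _),
          sum_update_G _ _ _ _ hjmem]
        have h1 := Finset.add_sum_erase Finset.univ b (Finset.mem_univ k)
        have h2 := Finset.add_sum_erase (Finset.univ.erase k) b hjmem
        omega
      -- product of c
      have hcprod : ((j.1 + 1 : ℝ) * (b j)) * (∏ i : Fin (n + 1), G i (c i))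
          = ((k.1 + 1 : ℝ) * (b k + 1)) * P := by
        rw [hc, prod_update_G _ _ _ _ _ (Finset.mem_univ _),
          prod_update_G _ _ _ _ _ hjmem, ← hprod,
          ← Finset.mul_prod_erase Finset.univ (fun i => G i (b i)) (Finset.mem_univ k),
          ← Finset.mul_prod_erase (Finset.univ.erase k) (fun i => G i (b i)) hjmem]
        have hm' : b j - 1 = m := by omega
        rw [hm', hm]
        set R : ℝ := ∏ i ∈ (Finset.univ.erase k).erase j, G i (b i) with hR
        simp only [hGdef, Nat.factorial_succ, pow_succ]
        push_cast
        ring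
      have hcprodpos : 0 < ∏ i : Fin (n + 1), G i (c i) := by
        refine Finset.prod_pos fun i _ => ?_
        simp only [hGdef]
        positivity
      have haj : ((a t : ℕ) : ℝ) = (b j : ℝ) := by
        rw [show b j = a t from hbcast t]
      show (((t.1 + 2) * (b k + 1) : ℝ) / (n + 1)) *
          ((Nat.factorial (n+1) : ℝ) * θ ^ (∑ i, c i) /
            ((∏ i : Fin (n + 1), G i (c i)) * risingFac θ (n+1)))
          = ESF n θ a * (((t.1 + 1 : ℝ) * (a t)) / (θ + n))
      rw [hcsum, hrf, hESF, Nat.factorial_succ, haj]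
      have hbjpos : (0:ℝ) < ((j.1 + 1 : ℝ) * (b j)) := by positivity
      have hPi : (∏ i : Fin (n + 1), G i (c i))
          = ((k.1 + 1 : ℝ) * (b k + 1)) * P / ((j.1 + 1 : ℝ) * (b j)) := by
        rw [eq_div_iff hbjpos.ne']
        linarith [hcprod]
      rw [hPi, hjval, hkval]
      have h1 : ((t.1:ℝ) + 1) * (b j) ≠ 0 := by positivity
      have h2 : ((t.1:ℝ) + 1 + 1) * ((b k : ℝ) + 1) ≠ 0 := by positivity
      field_simp
      push_cast
      ring
  -- assemble
  have hmain : ∑ t : Fin n, ((t.1 + 1 : ℝ) * (a t)) = (n : ℝ) := by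
    have h2 : ((∑ i : Fin n, (i.1 + 1) * a i : ℕ) : ℝ) = (n : ℝ) := by rw [ha]
    rw [← h2]
    push_cast
    ring
  calc ESF n θ a
      = ESF n θ a * (θ / (θ + n)) + ∑ t : Fin n, ESF n θ a * (((t.1 + 1 : ℝ) * (a t)) / (θ + n)) := by
        rw [← Finset.mul_sum, ← Finset.sum_div, hmain, ← mul_add, ← add_div,
          div_self hθn.ne', mul_one]
    _ = _ := by
        rw [← hterm1, Finset.sum_congr rfl fun t _ => (hterm2 t).symm]
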